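/- Let W be a real vector space and let A₁, …, A_k be linear endomorphisms of W such that Aᵢ² = identity for every i and Aᵢ ∘ A_j = − A_j ∘ Aᵢ whenever i ≠ j. Suppose there exist a nonzero vector v in W and a sign ε ∈ {1, −1} such that (A₁ ∘ A₂ ∘ ⋯ ∘ A_k)(v) = ε v. Then k(k−1)/2 is even, i.e., k is congruent to 0 or 1 modulo 4; if moreover k is even, then k is divisible by 4. -/

import Mathlib

private lemma swap_aux {R : Type*} [Ring R] (a : R) :
    ∀ (t : List R), (∀ b ∈ t, b * a = -(a * b)) →
      t.prod * a = (-1) ^ t.length * (a * t.prod)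
  | [], _ => by simp
  | b :: t, h => by
    have ih := swap_aux a t (fun c hc => h c (List.mem_cons_of_mem _ hc))
    have hb := h b (List.mem_cons_self)
    have hc : ∀ x : R, x * (-1 : R) ^ t.length = (-1) ^ t.length * x :=
      fun x => ((Commute.neg_one_right x).pow_right t.length).eq
    calc (b :: t).prod * a = b * (t.prod * a) := by
          rw [List.prod_cons, mul_assoc]
      _ = b * ((-1) ^ t.length * (a * t.prod)) := by rw [ih]
      _ = (-1) ^ t.length * (b * (a * t.prod)) := by
          rw [← mul_assoc, hc]; simp only [mul_assoc]
      _ = (-1) ^ t.length * ((b * a) * t.prod) := by rw [mul_assoc]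
      _ = (-1) ^ t.length * (-(a * b) * t.prod) := by rw [hb]
      _ = (-1) ^ (b :: t).length * (a * (b :: t).prod) := by
          simp [pow_succ, List.prod_cons, mul_assoc]

private lemma prod_sq_aux {R : Type*} [Ring R] :
    ∀ (l : List R), (∀ a ∈ l, a * a = 1) →
      l.Pairwise (fun a b => b * a = -(a * b)) →
      l.prod * l.prod = (-1) ^ (l.length * (l.length - 1) / 2)
  | [], _, _ => by simp
  | a :: t, hsq, hp => by
    rw [List.pairwise_cons] at hp
    have ih := prod_sq_aux t (fun b hb => hsq b (List.mem_cons_of_mem _ hb)) hp.2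
    have ha : a * a = 1 := hsq a (List.mem_cons_self)
    have hsw := swap_aux a t hp.1
    have hc : ∀ x : R, x * (-1 : R) ^ t.length = (-1) ^ t.length * x :=
      fun x => ((Commute.neg_one_right x).pow_right t.length).eq
    have key : (a :: t).prod * (a :: t).prod
        = (-1) ^ t.length * ((-1) ^ (t.length * (t.length - 1) / 2)) := by
      calc (a :: t).prod * (a :: t).prod = a * (t.prod * a) * t.prod := by
            simp [List.prod_cons, mul_assoc]
        _ = a * ((-1) ^ t.length * (a * t.prod)) * t.prod := by rw [hsw]
        _ = (-1) ^ t.length * ((a * a) * (t.prod * t.prod)) := by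
            rw [← mul_assoc a, hc]; simp only [mul_assoc]
        _ = (-1) ^ t.length * ((-1) ^ (t.length * (t.length - 1) / 2)) := by
            rw [ha, one_mul, ih]
    rw [key, ← pow_add, List.length_cons, Nat.triangle_succ, Nat.add_comm]

private lemma parity_aux (k : ℕ) (h : Even (k * (k - 1) / 2)) :
    (k % 4 = 0 ∨ k % 4 = 1) ∧ (Even k → 4 ∣ k) := by
  have hk : k = 4 * (k / 4) + k % 4 := (Nat.div_add_mod k 4).symm
  have hr : k % 4 < 4 := Nat.mod_lt _ (by norm_num)
  set q := k / 4 with hq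
  have main : k % 4 = 0 ∨ k % 4 = 1 := by
    by_contra hcon
    push_neg at hcon
    have h23 : k % 4 = 2 ∨ k % 4 = 3 := by omega
    rcases h23 with h2 | h3
    · have hk' : k = 4 * q + 2 := by omega
      have : k * (k - 1) = 2 * ((2 * q + 1) * (4 * q + 1)) := by
        rw [hk', show 4 * q + 2 - 1 = 4 * q + 1 from by omega]; ring
      rw [this, Nat.mul_div_cancel_left _ (by norm_num : 0 < 2)] at h
      simp [parity_simps] at h
    · have hk' : k = 4 * q + 3 := by omega
      have : k * (k - 1) = 2 * ((4 * q + 3) * (2 * q + 1)) := by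
        rw [hk', show 4 * q + 3 - 1 = 4 * q + 2 from by omega]; ring
      rw [this, Nat.mul_div_cancel_left _ (by norm_num : 0 < 2)] at h
      simp [parity_simps] at h
  refine ⟨main, fun hek => ?_⟩
  rw [Nat.even_iff] at hek
  omega

theorem eigenvector_of_anticommuting_involutions {W : Type*} [AddCommGroup W]
    [Module ℝ W] (k : ℕ) (A : Fin k → Module.End ℝ W)
    (hsq : ∀ i, A i * A i = 1)
    (hanti : ∀ i j, i ≠ j → A i * A j = -(A j * A i))
    (v : W) (hv : v ≠ 0) (ε : ℝ) (hε : ε = 1 ∨ ε = -1)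
    (hfix : (((List.finRange k).map A).prod) v = ε • v) :
    Even (k * (k - 1) / 2) ∧ (k % 4 = 0 ∨ k % 4 = 1) ∧ (Even k → 4 ∣ k) := by
  set l : List (Module.End ℝ W) := (List.finRange k).map A with hl
  have hlen : l.length = k := by simp [hl]
  have hsq' : ∀ a ∈ l, a * a = 1 := by
    intro a ha
    rw [hl, List.mem_map] at ha
    obtain ⟨i, _, rfl⟩ := ha
    exact hsq i
  have hpair : l.Pairwise (fun a b => b * a = -(a * b)) := by
    rw [hl, List.pairwise_map]
    refine List.Pairwise.imp ?_ (List.pairwise_lt_finRange k)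
    intro i j hij
    exact hanti j i (ne_of_gt hij)
  have hps := prod_sq_aux l hsq' hpair
  rw [hlen] at hps
  have heval : (l.prod * l.prod) v = v := by
    rw [Module.End.mul_apply, hfix, map_smul, hfix, smul_smul]
    rcases hε with rfl | rfl <;> norm_num
  have heven : Even (k * (k - 1) / 2) := by
    by_contra hodd
    rw [Nat.not_even_iff_odd] at hodd
    rw [hps, hodd.neg_one_pow] at heval
    have : (-v : W) = v := by simpa using heval
    have hvv : v + v = 0 := by
      nth_rewrite 1 [← this]
      exact neg_add_cancel v
    have h2 : (2 : ℝ) • v = 0 := by rw [two_smul]; exact hvv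
    rw [smul_eq_zero] at h2
    rcases h2 with h2 | h2
    · norm_num at h2
    · exact hv h2
  exact ⟨heven, parity_aux k heven⟩
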